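/- Weighted Hardy inequality in the Gaussian-type weight: there exists C > 0 independent of b ∈ (0,1) such that for all u ∈ C¹(ℝ²) with the right-hand side finite, ∫_{ℝ²} (1+|y|²) u² e^{−b|y|²/2} dy ≤ C ∫_{ℝ²} (1+|y|⁴)|∇u|² e^{−b|y|²/2} dy, provided u has no radial component (∫_{|y|=r} u = 0 for a.e. r > 0). -/

import Mathlib

open MeasureTheory Filter

noncomputable section

abbrev E2 : Type := EuclideanSpace ℝ (Fin 2)

/-- The point of polar coordinates `(r, θ)` in ℝ². -/
def circPt (r θ : ℝ) : E2 :=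
  (WithLp.equiv 2 (Fin 2 → ℝ)).symm ![r * Real.cos θ, r * Real.sin θ]

open intervalIntegral Set Real in
/-- A continuous function with zero integral has a root. -/
lemma exists_root {g : ℝ → ℝ} {a b : ℝ} (hab : a < b) (hg : Continuous g)
    (h0 : ∫ x in a..b, g x = 0) : ∃ c ∈ Icc a b, g c = 0 := by
  by_contra h
  push_neg at h
  have hint : IntervalIntegrable g volume a b := hg.intervalIntegrable a b
  have hsign : (∀ x ∈ Icc a b, 0 < g x) ∨ (∀ x ∈ Icc a b, g x < 0) := by
    rcases (h a ⟨le_rfl, hab.le⟩).lt_or_gt with hneg | hpos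
    · right
      intro x hx
      by_contra hge
      push_neg at hge
      have h0x : (0:ℝ) ∈ uIcc (g a) (g x) := by
        rcases (h x hx).lt_or_gt with h1 | h1
        · exact Set.mem_uIcc.2 (Or.inl ⟨hneg.le, (lt_of_le_of_ne hge (Ne.symm (h x hx))).le⟩)
        · exact Set.mem_uIcc.2 (Or.inl ⟨hneg.le, h1.le⟩)
      obtain ⟨c, hc, hc0⟩ := intermediate_value_uIcc (hg.continuousOn (s := uIcc a x)) h0x
      have hcIcc : c ∈ Icc a b := by
        have : uIcc a x ⊆ Icc a b := by
          rw [uIcc_of_le hx.1]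
          exact Icc_subset_Icc le_rfl hx.2
        exact this hc
      exact h c hcIcc hc0
    · left
      intro x hx
      by_contra hge
      push_neg at hge
      have h0x : (0:ℝ) ∈ uIcc (g a) (g x) := by
        exact Set.mem_uIcc.2 (Or.inr ⟨(lt_of_le_of_ne hge (h x hx)).le, hpos.le⟩)
      obtain ⟨c, hc, hc0⟩ := intermediate_value_uIcc (hg.continuousOn (s := uIcc a x)) h0x
      have hcIcc : c ∈ Icc a b := by
        have : uIcc a x ⊆ Icc a b := by
          rw [uIcc_of_le hx.1]
          exact Icc_subset_Icc le_rfl hx.2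
        exact this hc
      exact h c hcIcc hc0
  rcases hsign with hpos | hneg
  · have : 0 < ∫ x in a..b, g x :=
      intervalIntegral_pos_of_pos_on hint (fun x hx => hpos x ⟨hx.1.le, hx.2.le⟩) hab
    exact absurd h0 this.ne'
  · have : 0 < ∫ x in a..b, -g x :=
      intervalIntegral_pos_of_pos_on hint.neg
        (fun x hx => neg_pos.2 (hneg x ⟨hx.1.le, hx.2.le⟩)) hab
    rw [intervalIntegral.integral_neg, h0, neg_zero] at this
    exact lt_irrefl 0 this

open intervalIntegral Set in
/-- Non-sharp Cauchy–Schwarz via AM-GM: `(∫ |f|)² ≤ (b-a) ∫ f²` for continuous `f`. -/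
lemma sq_integral_abs_le {f : ℝ → ℝ} {a b : ℝ} (hab : a ≤ b) (hf : Continuous f) :
    (∫ x in a..b, |f x|) ^ 2 ≤ (b - a) * ∫ x in a..b, f x ^ 2 := by
  set S := ∫ x in a..b, |f x| with hS
  set I := ∫ x in a..b, f x ^ 2 with hI
  have hInn : 0 ≤ I := intervalIntegral.integral_nonneg hab (fun x _ => sq_nonneg _)
  have hSnn : 0 ≤ S := intervalIntegral.integral_nonneg hab (fun x _ => abs_nonneg _)
  rcases le_or_gt S 0 with hS0 | hS0
  · have : S = 0 := le_antisymm hS0 hSnn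
    rw [this]
    nlinarith [mul_nonneg (sub_nonneg.2 hab) hInn]
  · rcases eq_or_lt_of_le hab with rfl | hab'
    · simp only [intervalIntegral.integral_same] at hS
      nlinarith
    have hba : 0 < b - a := sub_pos.2 hab'
    set t : ℝ := S / (b - a) with ht
    have htpos : 0 < t := div_pos hS0 hba
    have key : S ≤ t * (b - a) / 2 + (1 / (2 * t)) * I := by
      have hmono : ∫ x in a..b, |f x| ≤ ∫ x in a..b, (t / 2 + f x ^ 2 / (2 * t)) := by
        apply intervalIntegral.integral_mono_on hab
          (hf.abs.intervalIntegrable a b)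
          ((by fun_prop : Continuous fun x => t / 2 + f x ^ 2 / (2 * t)).intervalIntegrable a b)
        intro x _
        have h2t : (0:ℝ) < 2 * t := by positivity
        rw [show t / 2 + f x ^ 2 / (2 * t) = (t * t + f x ^ 2) / (2 * t) by
          field_simp]
        rw [le_div_iff₀ h2t]
        nlinarith [sq_nonneg (|f x| - t), sq_abs (f x)]
      have : ∫ x in a..b, (t / 2 + f x ^ 2 / (2 * t)) = t * (b - a) / 2 + (1 / (2 * t)) * I := by
        rw [intervalIntegral.integral_add (intervalIntegrable_const)
          ((by fun_prop : Continuous fun x => f x ^ 2 / (2 * t)).intervalIntegrable a b)]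
        simp [hI, intervalIntegral.integral_div, div_eq_mul_inv, mul_comm]
      linarith [hmono, this.le, this.ge]
    rw [ht] at key
    have : S / (b - a) * (b - a) / 2 = S / 2 := by field_simp
    rw [this] at key
    have key2 : S / 2 ≤ 1 / (2 * (S / (b - a))) * I := by linarith
    have hSb : 1 / (2 * (S / (b - a))) = (b - a) / (2 * S) := by
      field_simp
    rw [hSb] at key2
    have h2S : (0:ℝ) < 2 * S := by positivity
    have key3 := mul_le_mul_of_nonneg_right key2 h2S.le
    have e1 : S / 2 * (2 * S) = S ^ 2 := by ring
    have e2 : (b - a) / (2 * S) * I * (2 * S) = (b - a) * I := by field_simp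
    rw [e1, e2] at key3
    exact key3

open intervalIntegral Set in
/-- A non-sharp Wirtinger-type inequality. -/
lemma wirtinger_lite {g g' : ℝ → ℝ} {a b : ℝ} (hab : a < b)
    (hd : ∀ x, HasDerivAt g (g' x) x) (hc' : Continuous g')
    (h0 : ∫ x in a..b, g x = 0) :
    ∫ x in a..b, g x ^ 2 ≤ (b - a) ^ 2 * ∫ x in a..b, g' x ^ 2 := by
  have hg : Continuous g := by
    rw [continuous_iff_continuousAt]; exact fun x => (hd x).continuousAt
  obtain ⟨c, hc, hc0⟩ := exists_root hab hg h0
  set S := ∫ x in a..b, |g' x| with hS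
  set I := ∫ x in a..b, g' x ^ 2 with hI
  have hbound : ∀ x ∈ Icc a b, g x ^ 2 ≤ S ^ 2 := by
    intro x hx
    have ftc : ∫ t in c..x, g' t = g x - g c :=
      intervalIntegral.integral_eq_sub_of_hasDerivAt (fun t _ => hd t)
        (hc'.intervalIntegrable c x)
    rw [hc0, sub_zero] at ftc
    have habs : |g x| ≤ S := by
      rw [← ftc]
      rcases le_total c x with hcx | hxc
      · calc |∫ t in c..x, g' t| ≤ ∫ t in c..x, |g' t| :=
              intervalIntegral.abs_integral_le_integral_abs hcx
          _ ≤ S := intervalIntegral.integral_mono_interval hc.1 hcx hx.2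
              (Filter.Eventually.of_forall fun t => abs_nonneg _)
              (hc'.abs.intervalIntegrable a b)
      · rw [intervalIntegral.integral_symm]
        rw [abs_neg]
        calc |∫ t in x..c, g' t| ≤ ∫ t in x..c, |g' t| :=
              intervalIntegral.abs_integral_le_integral_abs hxc
          _ ≤ S := intervalIntegral.integral_mono_interval hx.1 hxc hc.2
              (Filter.Eventually.of_forall fun t => abs_nonneg _)
              (hc'.abs.intervalIntegrable a b)
    calc g x ^ 2 = |g x| ^ 2 := (sq_abs _).symm
      _ ≤ S ^ 2 := by
          have : 0 ≤ |g x| := abs_nonneg _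
          nlinarith
  have hCS : S ^ 2 ≤ (b - a) * I := sq_integral_abs_le hab.le hc'
  calc ∫ x in a..b, g x ^ 2 ≤ ∫ x in a..b, S ^ 2 := by
        apply intervalIntegral.integral_mono_on hab.le
          ((hg.pow 2).intervalIntegrable a b) (intervalIntegrable_const)
        exact hbound
    _ = (b - a) * S ^ 2 := by simp [smul_eq_mul]
    _ ≤ (b - a) * ((b - a) * I) :=
        mul_le_mul_of_nonneg_left hCS (by linarith)
    _ = (b - a) ^ 2 * I := by ring

/-- The derivative of `circPt r ·`. -/
def circDer (r θ : ℝ) : E2 :=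
  (WithLp.equiv 2 (Fin 2 → ℝ)).symm ![r * -Real.sin θ, r * Real.cos θ]

lemma norm_circPt (r θ : ℝ) : ‖circPt r θ‖ = |r| := by
  rw [EuclideanSpace.norm_eq]
  simp only [circPt, WithLp.equiv_symm_apply, PiLp.toLp_apply, Fin.sum_univ_two,
    Matrix.cons_val_zero, Matrix.cons_val_one, Matrix.head_cons, Real.norm_eq_abs, sq_abs]
  rw [show (r * Real.cos θ) ^ 2 + (r * Real.sin θ) ^ 2 = r ^ 2 by
    nlinarith [Real.sin_sq_add_cos_sq θ]]
  exact Real.sqrt_sq_eq_abs r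

lemma norm_circDer (r θ : ℝ) : ‖circDer r θ‖ = |r| := by
  rw [EuclideanSpace.norm_eq]
  simp only [circDer, WithLp.equiv_symm_apply, PiLp.toLp_apply, Fin.sum_univ_two,
    Matrix.cons_val_zero, Matrix.cons_val_one, Matrix.head_cons, Real.norm_eq_abs, sq_abs]
  rw [show (r * -Real.sin θ) ^ 2 + (r * Real.cos θ) ^ 2 = r ^ 2 by
    nlinarith [Real.sin_sq_add_cos_sq θ]]
  exact Real.sqrt_sq_eq_abs r

lemma hasDerivAt_circPt (r θ : ℝ) : HasDerivAt (fun t => circPt r t) (circDer r θ) θ := by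
  have hpi : HasDerivAt (fun t => (![r * Real.cos t, r * Real.sin t] : Fin 2 → ℝ))
      ![r * -Real.sin θ, r * Real.cos θ] θ := by
    apply hasDerivAt_pi.2
    intro i
    fin_cases i
    · simpa [mul_comm] using (Real.hasDerivAt_cos θ).const_mul r
    · simpa [mul_comm] using (Real.hasDerivAt_sin θ).const_mul r
  exact ((EuclideanSpace.equiv (Fin 2) ℝ).symm :
    (Fin 2 → ℝ) →L[ℝ] E2).hasFDerivAt.comp_hasDerivAt θ hpi

lemma continuous_circPt : Continuous (fun p : ℝ × ℝ => circPt p.1 p.2) := by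
  apply ((EuclideanSpace.equiv (Fin 2) ℝ).symm.continuous).comp
  apply continuous_pi
  intro i
  fin_cases i
  · simpa using (by fun_prop : Continuous fun a : ℝ × ℝ => a.1 * Real.cos a.2)
  · simpa using (by fun_prop : Continuous fun a : ℝ × ℝ => a.1 * Real.sin a.2)

lemma continuous_circDer (r : ℝ) : Continuous (fun θ : ℝ => circDer r θ) := by
  apply ((EuclideanSpace.equiv (Fin 2) ℝ).symm.continuous).comp
  apply continuous_pi
  intro i
  fin_cases i
  · simpa using (by fun_prop : Continuous fun a : ℝ => -(r * Real.sin a))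
  · simpa using (by fun_prop : Continuous fun a : ℝ => r * Real.cos a)

/-- The identification of `ℝ × ℝ` with `E2`. -/
def Phi (p : ℝ × ℝ) : E2 := (WithLp.equiv 2 (Fin 2 → ℝ)).symm ![p.1, p.2]

lemma measurePreserving_Phi : MeasurePreserving Phi volume volume := by
  have h1 : MeasurePreserving (WithLp.toLp 2 : (Fin 2 → ℝ) → E2) volume volume :=
    PiLp.volume_preserving_toLp (Fin 2)
  have h2 : MeasurePreserving (MeasurableEquiv.finTwoArrow (α := ℝ)).symm volume volume :=
    (volume_preserving_finTwoArrow ℝ).symm _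
  have : Phi = (WithLp.toLp 2 : (Fin 2 → ℝ) → E2) ∘
      (MeasurableEquiv.finTwoArrow (α := ℝ)).symm := by
    funext p
    simp [Phi, MeasurableEquiv.finTwoArrow]
  rw [this]
  exact h1.comp h2

lemma Phi_polar (p : ℝ × ℝ) : Phi (polarCoord.symm p) = circPt p.1 p.2 := rfl

open Set in
/-- Polar-coordinates decomposition of a Lebesgue integral over `E2`. -/
lemma lintegral_E2_polar (H : E2 → ENNReal) (hH : Measurable H) :
    ∫⁻ y, H y = ∫⁻ r in Ioi (0:ℝ), ∫⁻ θ in Ioo (-Real.pi) Real.pi,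
      ENNReal.ofReal r * H (circPt r θ) := by
  rw [← measurePreserving_Phi.lintegral_comp hH]
  rw [← lintegral_comp_polarCoord_symm (fun p => H (Phi p))]
  have heq : ∀ p : ℝ × ℝ, H (Phi (polarCoord.symm p)) = H (circPt p.1 p.2) :=
    fun p => by rw [Phi_polar]
  simp only [heq]
  rw [show polarCoord.target = Ioi (0:ℝ) ×ˢ Ioo (-Real.pi) Real.pi from rfl]
  rw [Measure.volume_eq_prod, ← Measure.prod_restrict]
  rw [lintegral_prod]
  · simp only [smul_eq_mul]
  exact (((ENNReal.measurable_ofReal.comp measurable_fst).mul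
    ((hH.comp continuous_circPt.measurable)))).aemeasurable

open Set Real in
/-- weighted Hardy inequality in the Gaussian-type weight, with constant
uniform in `b ∈ (0,1)`: for `u` of class `C¹` with no radial component,
`∫ (1+|y|²) u² e^{-b|y|²/2} ≤ C ∫ (1+|y|⁴)|∇u|² e^{-b|y|²/2}`. -/
theorem weighted_hardy_gaussian :
    ∃ C : ℝ, 0 < C ∧ ∀ b : ℝ, 0 < b → b < 1 → ∀ u : E2 → ℝ,
      ContDiff ℝ 1 u →
      (∀ r : ℝ, 0 < r → (∫ θ in (0:ℝ)..(2*Real.pi), u (circPt r θ)) = 0) →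
      (∫⁻ y : E2, ENNReal.ofReal
          ((1+‖y‖^2) * (u y)^2 * Real.exp (-b*‖y‖^2/2))) ≤
        ENNReal.ofReal C * ∫⁻ y : E2, ENNReal.ofReal
          ((1+‖y‖^4) * ‖fderiv ℝ u y‖^2 * Real.exp (-b*‖y‖^2/2)) := by
  have pi_pos := Real.pi_pos
  refine ⟨8 * Real.pi ^ 2, by positivity, ?_⟩
  intro b hb0 hb1 u hu hmean
  have hu_cont : Continuous u := hu.continuous
  have hdu_cont : Continuous (fderiv ℝ u) := hu.continuous_fderiv one_ne_zero
  set F : E2 → ENNReal := fun y =>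
    ENNReal.ofReal ((1+‖y‖^2) * (u y)^2 * Real.exp (-b*‖y‖^2/2)) with hF
  set G : E2 → ENNReal := fun y =>
    ENNReal.ofReal ((1+‖y‖^4) * ‖fderiv ℝ u y‖^2 * Real.exp (-b*‖y‖^2/2)) with hG
  have hF_meas : Measurable F := by
    apply ENNReal.measurable_ofReal.comp
    apply Continuous.measurable
    exact ((continuous_const.add ((continuous_norm).pow 2)).mul (hu_cont.pow 2)).mul
      (Real.continuous_exp.comp (by continuity))
  have hG_meas : Measurable G := by
    apply ENNReal.measurable_ofReal.comp
    apply Continuous.measurable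
    exact ((continuous_const.add ((continuous_norm).pow 4)).mul (hdu_cont.norm.pow 2)).mul
      (Real.continuous_exp.comp (by continuity))
  rw [lintegral_E2_polar F hF_meas, lintegral_E2_polar G hG_meas,
    ← lintegral_const_mul' _ _ ENNReal.ofReal_ne_top]
  refine lintegral_mono_ae ?_
  rw [ae_restrict_iff' measurableSet_Ioi]
  refine Eventually.of_forall (fun r hr => ?_)
  rw [mem_Ioi] at hr
  -- per-radius estimate
  set w : ℝ := Real.exp (-b * r^2 / 2) with hw
  have hwpos : 0 < w := Real.exp_pos _
  set g : ℝ → ℝ := fun θ => u (circPt r θ) with hg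
  set N : ℝ → ℝ := fun θ => ‖fderiv ℝ u (circPt r θ)‖ with hN
  set g' : ℝ → ℝ := fun θ => (fderiv ℝ u (circPt r θ)) (circDer r θ) with hg'
  have hnorm : ∀ θ : ℝ, ‖circPt r θ‖ = r := fun θ => by rw [norm_circPt, abs_of_pos hr]
  have hcirc : Continuous (fun θ : ℝ => circPt r θ) :=
    continuous_circPt.comp (continuous_const.prodMk continuous_id)
  have hcg : Continuous g := hu_cont.comp hcirc
  have hcN : Continuous N := (hdu_cont.comp hcirc).norm
  have hcg' : Continuous g' := (hdu_cont.comp hcirc).clm_apply (continuous_circDer r)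
  -- pull out the constants
  have hFeq : ∀ θ : ℝ, ENNReal.ofReal r * F (circPt r θ)
      = ENNReal.ofReal (r * ((1+r^2) * w)) * ENNReal.ofReal (g θ ^ 2) := by
    intro θ
    simp only [hF, hnorm θ]
    rw [← ENNReal.ofReal_mul hr.le, ← ENNReal.ofReal_mul (by positivity)]
    congr 1
    simp only [hg, hw]
    ring
  have hGeq : ∀ θ : ℝ, ENNReal.ofReal r * G (circPt r θ)
      = ENNReal.ofReal (r * ((1+r^4) * w)) * ENNReal.ofReal (N θ ^ 2) := by
    intro θ
    simp only [hG, hnorm θ]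
    rw [← ENNReal.ofReal_mul hr.le, ← ENNReal.ofReal_mul (by positivity)]
    congr 1
    simp only [hN, hw]
    ring
  -- θ-integrals as interval integrals
  have hIoo : ∀ f : ℝ → ℝ, Continuous f → (∀ θ, 0 ≤ f θ) →
      ∫⁻ θ in Ioo (-Real.pi) Real.pi, ENNReal.ofReal (f θ)
        = ENNReal.ofReal (∫ θ in (-Real.pi)..Real.pi, f θ) := by
    intro f hf hf0
    rw [Measure.restrict_congr_set Ioo_ae_eq_Ioc]
    rw [intervalIntegral.integral_of_le (by linarith : -Real.pi ≤ Real.pi)]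
    rw [ofReal_integral_eq_lintegral_ofReal (hf.integrableOn_Ioc) (ae_of_all _ hf0)]
  -- Wirtinger inequality for g
  have hd : ∀ θ : ℝ, HasDerivAt g (g' θ) θ := fun θ =>
    ((hu.differentiable one_ne_zero) (circPt r θ)).hasFDerivAt.comp_hasDerivAt θ
      (hasDerivAt_circPt r θ)
  have hper : Function.Periodic g (2 * Real.pi) := by
    intro θ
    simp only [hg, circPt, Real.cos_add_two_pi, Real.sin_add_two_pi]
  have hzero : ∫ θ in (-Real.pi)..Real.pi, g θ = 0 := by
    have h1 := hper.intervalIntegral_add_eq (-Real.pi) 0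
    rw [show -Real.pi + 2 * Real.pi = Real.pi by ring, zero_add] at h1
    rw [h1]
    exact hmean r hr
  have hwirt : ∫ θ in (-Real.pi)..Real.pi, g θ ^ 2 ≤
      (Real.pi - -Real.pi) ^ 2 * ∫ θ in (-Real.pi)..Real.pi, g' θ ^ 2 :=
    wirtinger_lite (by linarith) hd hcg' hzero
  -- pointwise derivative estimate
  have hptw : ∀ θ : ℝ, g' θ ^ 2 ≤ r ^ 2 * N θ ^ 2 := by
    intro θ
    have h1 := (fderiv ℝ u (circPt r θ)).le_opNorm (circDer r θ)
    rw [norm_circDer, abs_of_pos hr] at h1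
    have h2 : |g' θ| ≤ N θ * r := by simpa [hg', hN, Real.norm_eq_abs] using h1
    nlinarith [sq_abs (g' θ), abs_nonneg (g' θ), mul_nonneg (norm_nonneg
      (fderiv ℝ u (circPt r θ))) hr.le]
  set J : ℝ := ∫ θ in (-Real.pi)..Real.pi, N θ ^ 2 with hJ
  have hJnn : 0 ≤ J := intervalIntegral.integral_nonneg (by linarith) (fun x _ => sq_nonneg _)
  have hint2 : ∫ θ in (-Real.pi)..Real.pi, g' θ ^ 2 ≤ r ^ 2 * J := by
    rw [hJ, ← intervalIntegral.integral_const_mul]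
    exact intervalIntegral.integral_mono_on (by linarith)
      ((hcg'.pow 2).intervalIntegrable _ _)
      ((continuous_const.mul (hcN.pow 2)).intervalIntegrable _ _)
      (fun x _ => hptw x)
  have hgsq_nn : 0 ≤ ∫ θ in (-Real.pi)..Real.pi, g θ ^ 2 :=
    intervalIntegral.integral_nonneg (by linarith) (fun x _ => sq_nonneg _)
  -- final chain
  calc ∫⁻ θ in Ioo (-Real.pi) Real.pi, ENNReal.ofReal r * F (circPt r θ)
      = ENNReal.ofReal (r * ((1+r^2) * w)) *
          ENNReal.ofReal (∫ θ in (-Real.pi)..Real.pi, g θ ^ 2) := by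
        simp only [hFeq]
        rw [lintegral_const_mul' _ _ ENNReal.ofReal_ne_top,
          hIoo (fun θ => g θ ^ 2) (hcg.pow 2) (fun θ => sq_nonneg _)]
    _ ≤ ENNReal.ofReal (r * ((1+r^2) * w)) *
          ENNReal.ofReal ((Real.pi - -Real.pi) ^ 2 * (r ^ 2 * J)) := by
        refine mul_le_mul' le_rfl (ENNReal.ofReal_le_ofReal ?_)
        refine le_trans hwirt ?_
        exact mul_le_mul_of_nonneg_left hint2 (by positivity)
    _ ≤ ENNReal.ofReal (8 * Real.pi ^ 2) *
          (ENNReal.ofReal (r * ((1+r^4) * w)) * ENNReal.ofReal J) := by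
        rw [← ENNReal.ofReal_mul (by positivity), ← ENNReal.ofReal_mul (by positivity),
          ← ENNReal.ofReal_mul (by positivity)]
        refine ENNReal.ofReal_le_ofReal ?_
        have hkey : r ^ 2 * (1 + r ^ 2) ≤ 2 * (1 + r ^ 4) := by nlinarith [sq_nonneg (1 - r^2)]
        have hwJ : 0 ≤ w * J := mul_nonneg hwpos.le hJnn
        nlinarith [mul_nonneg (mul_nonneg hr.le hwJ) (sq_nonneg Real.pi),
          mul_le_mul_of_nonneg_right hkey (mul_nonneg (mul_nonneg hr.le hwJ)
            (by positivity : (0:ℝ) ≤ 4 * Real.pi ^ 2))]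
    _ = ENNReal.ofReal (8 * Real.pi ^ 2) *
          ∫⁻ θ in Ioo (-Real.pi) Real.pi, ENNReal.ofReal r * G (circPt r θ) := by
        simp only [hGeq]
        rw [lintegral_const_mul' _ _ ENNReal.ofReal_ne_top,
          hIoo (fun θ => N θ ^ 2) (hcN.pow 2) (fun θ => sq_nonneg _)]
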